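/- Let f : ℝⁿ → ℝⁿ be three times continuously differentiable, let y₀ ∈ ℝⁿ, and let y : [0, T) → ℝⁿ solve y'(t) = f(y(t)) with y(0) = y₀. For h > 0 small enough that I − h·Df(y₀) is invertible, define the Rosenbrock–Euler step ỹ₁(h) := y₀ + h (I − h·Df(y₀))⁻¹ f(y₀). Then the local error satisfies ‖ỹ₁(h) − y(h)‖₂ = (h²/2)‖Df(y₀)[f(y₀)]‖₂ + O(h³) as h → 0⁺. -/

import Mathlib

open Asymptotics Topology Set

set_option maxHeartbeats 1000000 in
private lemma aux_inv_stmt17 {E : Type*} [NormedAddCommGroup E] [InnerProductSpace ℝ E]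
    [CompleteSpace E] (A : E →L[ℝ] E) (w : E) (h : ℝ) (hh : ‖h • A‖ ≤ 1/2) :
    ‖h • (Ring.inverse (1 - h • A)) w - h • w - (h^2) • A w‖
      ≤ |h|^3 * (2 * ‖A‖^2 * ‖w‖) := by
  set R : E →L[ℝ] E := Ring.inverse (1 - h • A) with hR
  have hlt : ‖h • A‖ < 1 := lt_of_le_of_lt hh (by norm_num)
  have e2 := NormedRing.inverse_one_sub_nth_order' 2 hlt
  have e1 := NormedRing.inverse_one_sub_nth_order' 1 hlt
  have hone : ‖(1 : E →L[ℝ] E)‖ ≤ 1 := ContinuousLinearMap.norm_id_le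
  have hRnorm : ‖R‖ ≤ 2 := by
    have step : ‖R‖ ≤ 1 + ‖h • A‖ * ‖R‖ := by
      have : R = 1 + (h • A) * R := by
        conv_lhs => rw [hR, e1]
        rw [Finset.sum_range_one, pow_one, ← hR, pow_zero]
      calc ‖R‖ = ‖(1 : E →L[ℝ] E) + (h • A) * R‖ := by rw [← this]
        _ ≤ ‖(1 : E →L[ℝ] E)‖ + ‖(h • A) * R‖ := norm_add_le _ _
        _ ≤ 1 + ‖h • A‖ * ‖R‖ := add_le_add hone (norm_mul_le _ _)
    nlinarith [norm_nonneg R, norm_nonneg (h • A)]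
  have key : h • R w - h • w - (h^2) • A w = h • (((h • A)^2 * R) w) := by
    have : R = (1 + h • A) + (h • A)^2 * R := by
      conv_lhs => rw [hR, e2]
      rw [Finset.sum_range_succ, Finset.sum_range_one, pow_one, ← hR, pow_zero]
    conv_lhs => rw [this]
    have expand : ∀ v : E, (((1 + h • A) + (h • A)^2 * R : E →L[ℝ] E)) v
        = v + h • A v + ((h • A)^2 * R) v := by
      intro v
      simp [ContinuousLinearMap.add_apply, ContinuousLinearMap.smul_apply,
        ContinuousLinearMap.one_apply]
    rw [expand w]
    module
  rw [key]
  have b1 : ‖(((h • A)^2 * R) w)‖ ≤ ‖(h • A)^2 * R‖ * ‖w‖ := ContinuousLinearMap.le_opNorm _ _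
  have b2 : ‖(h • A)^2 * R‖ ≤ ‖h • A‖^2 * ‖R‖ :=
    le_trans (norm_mul_le _ _) (by gcongr; exact norm_pow_le' _ (by norm_num))
  have b3 : ‖h • A‖ ≤ |h| * ‖A‖ := by
    have := norm_smul h A
    rw [Real.norm_eq_abs] at this
    exact this.le
  rw [norm_smul, Real.norm_eq_abs]
  calc |h| * ‖(((h • A)^2 * R) w)‖ ≤ |h| * ((‖h • A‖^2 * ‖R‖) * ‖w‖) := by
        gcongr
        exact le_trans b1 (by gcongr)
    _ ≤ |h| * (((|h| * ‖A‖)^2 * 2) * ‖w‖) := by gcongr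
    _ = |h|^3 * (2 * ‖A‖^2 * ‖w‖) := by ring

set_option maxHeartbeats 2000000 in
set_option synthInstance.maxHeartbeats 400000 in
/-- Local error of the Rosenbrock–Euler step
`ỹ₁(h) = y₀ + h (I − h Df(y₀))⁻¹ f(y₀)` for `y' = f(y)`, `y(0) = y₀`:
`‖ỹ₁(h) − y(h)‖ = (h²/2)‖Df(y₀)[f(y₀)]‖ + O(h³)` as `h → 0⁺`. -/
theorem stmt17 {n : ℕ} (f : EuclideanSpace ℝ (Fin n) → EuclideanSpace ℝ (Fin n))
    (hf : ContDiff ℝ 3 f) (y₀ : EuclideanSpace ℝ (Fin n)) (T : ℝ) (hT : 0 < T)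
    (y : ℝ → EuclideanSpace ℝ (Fin n)) (hy0 : y 0 = y₀)
    (hy : ∀ t ∈ Set.Ico (0 : ℝ) T, HasDerivAt y (f (y t)) t) :
    (fun h : ℝ =>
        ‖(y₀ + h • (Ring.inverse (1 - h • fderiv ℝ f y₀)) (f y₀)) - y h‖ -
          h ^ 2 / 2 * ‖fderiv ℝ f y₀ (f y₀)‖)
      =O[𝓝[>] (0 : ℝ)] (fun h => h ^ 3) := by
  set A : EuclideanSpace ℝ (Fin n) →L[ℝ] EuclideanSpace ℝ (Fin n) := fderiv ℝ f y₀ with hA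
  set v : EuclideanSpace ℝ (Fin n) := A (f y₀) with hv
  set b : ℝ := T / 2 with hbdef
  have hb : 0 < b := by positivity
  set s : Set ℝ := Icc (0:ℝ) b with hsdef
  have hs : UniqueDiffOn ℝ s := uniqueDiffOn_Icc hb
  have h0 : (0:ℝ) ∈ s := ⟨le_refl 0, hb.le⟩
  have hsub : s ⊆ Ico (0:ℝ) T := fun t ht =>
    ⟨ht.1, lt_of_le_of_lt ht.2 (by rw [hbdef]; linarith)⟩
  have hder : ∀ t ∈ s, HasDerivWithinAt y (f (y t)) s t := fun t ht =>
    (hy t (hsub ht)).hasDerivWithinAt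
  have hdiff : DifferentiableOn ℝ y s := fun t ht => (hder t ht).differentiableWithinAt
  have heq : EqOn (derivWithin y s) (fun t => f (y t)) s := fun t ht =>
    (hder t ht).derivWithin (hs t ht)
  -- Regularity bootstrap: y is C³ on s
  have hy3 : ∀ m : ℕ, m ≤ 2 → ContDiffOn ℝ (m+1) y s := by
    intro m
    induction m with
    | zero =>
      intro _
      rw [contDiffOn_succ_iff_derivWithin hs]
      refine ⟨hdiff, by simp, ?_⟩
      refine (contDiffOn_zero.2 ?_).congr heq
      exact hf.continuous.comp_continuousOn hdiff.continuousOn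
    | succ k ih =>
      intro hk
      rw [contDiffOn_succ_iff_derivWithin hs]
      refine ⟨hdiff, by simp, ?_⟩
      refine (ContDiff.comp_contDiffOn (g := f) ?_ ?_).congr heq
      · exact hf.of_le (by exact_mod_cast hk.trans (by norm_num))
      · exact_mod_cast ih (le_trans (Nat.le_succ k) hk)
  have hyC3 : ContDiffOn ℝ ((2:ℕ)+1) y s := by exact_mod_cast hy3 2 le_rfl
  -- Taylor remainder bound
  obtain ⟨C, hC⟩ := exists_taylor_mean_remainder_bound hb.le hyC3
  -- Value of the Taylor polynomial
  have htay : ∀ h : ℝ, taylorWithinEval y 2 s 0 h = y₀ + h • f y₀ + (h^2/2) • v := by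
    intro h
    have h1 : iteratedDerivWithin 1 y s 0 = f y₀ := by
      rw [iteratedDerivWithin_one]
      rw [heq h0]
      simp only []
      rw [hy0]
    have h2 : iteratedDerivWithin 2 y s 0 = v := by
      rw [show (2:ℕ) = 1 + 1 from rfl, iteratedDerivWithin_succ]
      have e1 : EqOn (iteratedDerivWithin 1 y s) (fun t => f (y t)) s := by
        intro t ht
        rw [iteratedDerivWithin_one]
        exact heq ht
      rw [derivWithin_congr e1 (e1 h0)]
      have : HasDerivWithinAt (fun t => f (y t)) ((fderiv ℝ f (y 0)) (f (y 0))) s 0 :=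
        (hf.differentiable (by norm_num) (y 0)).hasFDerivAt.comp_hasDerivWithinAt 0 (hder 0 h0)
      rw [this.derivWithin (hs 0 h0), hy0, hv, hA]
    rw [taylor_within_apply]
    simp only [Finset.sum_range_succ, Finset.sum_range_zero, h1, h2, iteratedDerivWithin_zero,
      Nat.factorial, zero_add, sub_zero, pow_zero, pow_one, Nat.cast_ofNat, Nat.cast_one, hy0]
    norm_num
    module
  -- choose δ
  set ε : ℝ := 1 / (2 * (‖A‖ + 1)) with hε
  have hεpos : 0 < ε := by positivity
  set δ : ℝ := min b ε with hδ
  have hδpos : 0 < δ := lt_min hb hεpos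
  rw [isBigO_iff]
  refine ⟨2 * ‖A‖^2 * ‖f y₀‖ + C, ?_⟩
  filter_upwards [Ioo_mem_nhdsGT_of_mem (Set.mem_Ico.2 ⟨le_refl 0, hδpos⟩)] with h hh
  obtain ⟨hh0, hhδ⟩ := hh
  have hhb : h ∈ Icc 0 b := ⟨hh0.le, le_trans hhδ.le (min_le_left _ _)⟩
  have hhε : h ≤ ε := le_trans hhδ.le (min_le_right _ _)
  -- smallness of h • A
  have hsm : ‖h • A‖ ≤ 1/2 := by
    have h1 : ‖h • A‖ = |h| * ‖A‖ := by
      have := norm_smul h A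
      rwa [Real.norm_eq_abs] at this
    rw [h1, abs_of_pos hh0]
    have h2 : h * ‖A‖ ≤ ε * (‖A‖ + 1) := by
      apply mul_le_mul hhε (by linarith) (norm_nonneg _) hεpos.le
    have h3 : ε * (‖A‖ + 1) = 1/2 := by
      rw [hε]; field_simp
    linarith
  have hinv := aux_inv_stmt17 A (f y₀) h hsm
  have hTay := hC h hhb
  rw [htay h, sub_zero] at hTay
  -- combine
  have hdecomp :
      (y₀ + h • (Ring.inverse (1 - h • A)) (f y₀)) - y h - (h^2/2) • v
        = (h • (Ring.inverse (1 - h • A)) (f y₀) - h • f y₀ - (h^2) • A (f y₀))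
          + ((y₀ + h • f y₀ + (h^2/2) • v) - y h) := by
    rw [hv]; module
  have habs :
      |‖(y₀ + h • (Ring.inverse (1 - h • A)) (f y₀)) - y h‖ - h^2/2 * ‖v‖|
        ≤ ‖(y₀ + h • (Ring.inverse (1 - h • A)) (f y₀)) - y h - (h^2/2) • v‖ := by
    have : h^2/2 * ‖v‖ = ‖(h^2/2) • v‖ := by
      rw [norm_smul, Real.norm_eq_abs, abs_of_nonneg (by positivity)]
    rw [this]
    exact abs_norm_sub_norm_le _ _
  rw [Real.norm_eq_abs]
  calc |‖(y₀ + h • (Ring.inverse (1 - h • A)) (f y₀)) - y h‖ - h^2/2 * ‖v‖|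
      ≤ ‖(y₀ + h • (Ring.inverse (1 - h • A)) (f y₀)) - y h - (h^2/2) • v‖ := habs
    _ ≤ ‖h • (Ring.inverse (1 - h • A)) (f y₀) - h • f y₀ - (h^2) • A (f y₀)‖
          + ‖(y₀ + h • f y₀ + (h^2/2) • v) - y h‖ := by
        rw [hdecomp]; exact norm_add_le _ _
    _ ≤ |h|^3 * (2 * ‖A‖^2 * ‖f y₀‖) + C * h^3 := by
        gcongr
        rw [← norm_neg ((y₀ + h • f y₀ + (h^2/2) • v) - y h)]
        convert hTay using 2
        · rfl
        · rfl
        · module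
    _ = (2 * ‖A‖^2 * ‖f y₀‖ + C) * h^3 := by
        rw [abs_of_pos hh0]; ring
    _ ≤ (2 * ‖A‖^2 * ‖f y₀‖ + C) * ‖h^3‖ := by
        rw [Real.norm_eq_abs, abs_of_pos (by positivity)]
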